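/- Under the standing assumptions on f (in particular f(t,z) ≥ α|z|^p − r(t) with α > 0, p > 1, 0 ≤ r(t) ≤ C, and f lower semicontinuous in (t,z)), the function h_f : ℝ × ℝ^{N+1} → [0,+∞] is lower semicontinuous in (t,q). In particular, if (t_n, q_n) → (t,q) with q^t ≥ 0 and liminf h_f(t_n, q_n) = ℓ < +∞, then q^t = 0, q^x = 0, and h_f(t,q) = 0 ≤ ℓ. -/

import Mathlib

open scoped BigOperators

/-- Partial Fenchel conjugate of `f` in the `z` variable:
`f*_z(t, z*) = sup_z (z · z* − f(t,z))`. -/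
noncomputable def fenchelZ {N : ℕ} (f : ℝ → (Fin N → ℝ) → EReal) (t : ℝ)
    (zs : Fin N → ℝ) : EReal :=
  ⨆ z : Fin N → ℝ, (((∑ i, z i * zs i : ℝ) : EReal) - f t z)

/-- The convex set `K(t) = {(q^x, q^t) : q^t ≥ f*_z(t, q^x)}`. -/
def Kset {N : ℕ} (f : ℝ → (Fin N → ℝ) → EReal) (t : ℝ) :
    Set ((Fin N → ℝ) × ℝ) :=
  {q | fenchelZ f t q.1 ≤ (q.2 : EReal)}

/-- The one-homogeneous integrand `h_f`. -/
noncomputable def hf {N : ℕ} (f : ℝ → (Fin N → ℝ) → EReal) (t : ℝ)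
    (q : (Fin N → ℝ) × ℝ) : EReal :=
  if q.2 < 0 then ((-q.2 : ℝ) : EReal) * f t (fun i => -q.1 i / q.2)
  else if q.2 = 0 ∧ q.1 = 0 then 0
  else ⊤

/-- Euclidean norm on `Fin N → ℝ`. -/
noncomputable def eucNorm {N : ℕ} (z : Fin N → ℝ) : ℝ :=
  Real.sqrt (∑ i, z i ^ 2)

lemma eucNorm_nonneg {N : ℕ} (z : Fin N → ℝ) : 0 ≤ eucNorm z :=
  Real.sqrt_nonneg _

lemma abs_apply_le_eucNorm {N : ℕ} (z : Fin N → ℝ) (i : Fin N) :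
    |z i| ≤ eucNorm z := by
  rw [eucNorm, ← Real.sqrt_sq_eq_abs]
  exact Real.sqrt_le_sqrt (Finset.single_le_sum (f := fun j => z j ^ 2)
    (fun j _ => sq_nonneg _) (Finset.mem_univ i))

open Filter in
/-- Under the standing assumptions, `h_f` is lower semicontinuous in `(t,q)`;
in particular along sequences with `q^t ≥ 0` and finite liminf one gets
`q^t = 0`, `q^x = 0` and `h_f(t,q) = 0 ≤ ℓ`. -/
theorem stmt1 {N : ℕ} (f : ℝ → (Fin N → ℝ) → EReal) (α p C : ℝ)
    (hα : 0 < α) (hp : 1 < p) (r : ℝ → ℝ)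
    (hr : ∀ t, 0 ≤ r t ∧ r t ≤ C)
    (hconv : ∀ (t : ℝ) (z₁ z₂ : Fin N → ℝ) (a b : ℝ), 0 ≤ a → 0 ≤ b → a + b = 1 →
      f t (a • z₁ + b • z₂) ≤ (a : EReal) * f t z₁ + (b : EReal) * f t z₂)
    (hlsc : LowerSemicontinuous (fun q : ℝ × (Fin N → ℝ) => f q.1 q.2))
    (hgrowth : ∀ (t : ℝ) (z : Fin N → ℝ),
      ((α * eucNorm z ^ p - r t : ℝ) : EReal) ≤ f t z) :
    LowerSemicontinuous (fun q : ℝ × ((Fin N → ℝ) × ℝ) => hf f q.1 q.2) ∧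
    (∀ (tn : ℕ → ℝ) (qn : ℕ → (Fin N → ℝ) × ℝ) (t : ℝ) (q : (Fin N → ℝ) × ℝ)
        (l : EReal),
      Tendsto (fun n => (tn n, qn n)) atTop (nhds (t, q)) → 0 ≤ q.2 →
      liminf (fun n => hf f (tn n) (qn n)) atTop = l → l ≠ ⊤ →
      q.2 = 0 ∧ q.1 = 0 ∧ hf f t q = 0 ∧ (0 : EReal) ≤ l) := by
  have hC : 0 ≤ C := le_trans (hr 0).1 (hr 0).2
  -- a global lower bound for hf
  have hlowR : ∀ (t' : ℝ) (z : Fin N → ℝ), ((-C : ℝ) : EReal) ≤ f t' z := by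
    intro t' z
    refine le_trans ?_ (hgrowth t' z)
    refine EReal.coe_le_coe_iff.2 ?_
    have h1 : 0 ≤ α * eucNorm z ^ p :=
      mul_nonneg hα.le (Real.rpow_nonneg (eucNorm_nonneg z) p)
    have h2 := (hr t').2
    linarith
  have hlow : ∀ (t' : ℝ) (q' : (Fin N → ℝ) × ℝ),
      ((C * q'.2 : ℝ) : EReal) ≤ hf f t' q' := by
    intro t' q'
    unfold hf
    split_ifs with h1 h2
    · calc ((C * q'.2 : ℝ) : EReal) = ((-q'.2 : ℝ) : EReal) * ((-C : ℝ) : EReal) := by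
            rw [← EReal.coe_mul]; norm_cast; ring
        _ ≤ _ := mul_le_mul_of_nonneg_left (hlowR t' _)
            (by exact_mod_cast (neg_nonneg.2 h1.le))
    · simp [h2.1]
    · exact le_top
  have hL : LowerSemicontinuous (fun q : ℝ × ((Fin N → ℝ) × ℝ) => hf f q.1 q.2) := by
    intro x y hy
    rcases eq_or_ne y ⊥ with rfl | hyb
    · exact Eventually.of_forall fun x' =>
        lt_of_lt_of_le (EReal.bot_lt_coe _) (hlow x'.1 x'.2)
    have hyt : y ≠ ⊤ := (hy.trans_le le_top).ne
    lift y to ℝ using ⟨hyt, hyb⟩ with y₀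
    obtain ⟨t, qx, qt⟩ := x
    rcases lt_trichotomy qt 0 with hqt | hqt | hqt
    · -- q^t < 0
      have hspos : 0 < -qt := neg_pos.2 hqt
      have hfx : hf f t (qx, qt)
          = ((-qt : ℝ) : EReal) * f t (fun i => -qx i / qt) := by
        simp [hf, hqt]
      rw [hfx] at hy
      have hfbot : f t (fun i => -qx i / qt) ≠ ⊥ :=
        (lt_of_lt_of_le (EReal.bot_lt_coe _) (hlowR t _)).ne'
      obtain ⟨w, hw1, hw2⟩ : ∃ w : ℝ, (w : EReal) < f t (fun i => -qx i / qt)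
          ∧ y₀ < (-qt) * w := by
        by_cases hft : f t (fun i => -qx i / qt) = ⊤
        · refine ⟨|y₀| / (-qt) + 1, by rw [hft]; exact EReal.coe_lt_top _, ?_⟩
          have : (-qt) * (|y₀| / (-qt) + 1) = |y₀| + (-qt) := by
            field_simp [hqt.ne]
            ring
          rw [this]
          have := abs_nonneg y₀
          cases abs_cases y₀ with
          | inl h => linarith [h.1]
          | inr h => linarith [h.1]
        · set v := (f t (fun i => -qx i / qt)).toReal with hv
          have hveq : (v : EReal) = f t (fun i => -qx i / qt) :=
            EReal.coe_toReal hft hfbot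
          rw [← hveq, ← EReal.coe_mul, gt_iff_lt, EReal.coe_lt_coe_iff] at hy
          have hyv : y₀ / (-qt) < v := by
            rw [div_lt_iff₀ hspos]
            linarith [hy]
          refine ⟨(y₀ / (-qt) + v) / 2, ?_, ?_⟩
          · rw [← hveq, EReal.coe_lt_coe_iff]; linarith
          · have h1 : y₀ / (-qt) < (y₀ / (-qt) + v) / 2 := by linarith
            have := (div_lt_iff₀ hspos).1 h1
            linarith [this]
      -- eventual facts
      have hcneg : Continuous (fun x' : ℝ × ((Fin N → ℝ) × ℝ) => -x'.2.2) :=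
        (continuous_snd.snd).neg
      have ev1 : ∀ᶠ x' : ℝ × ((Fin N → ℝ) × ℝ) in nhds (t, (qx, qt)),
          x'.2.2 < 0 :=
        ((continuous_snd.snd).tendsto (t, (qx, qt))).eventually_lt_const hqt
      have ev2 : ∀ᶠ x' : ℝ × ((Fin N → ℝ) × ℝ) in nhds (t, (qx, qt)),
          y₀ < (-x'.2.2) * w := by
        have T : Tendsto (fun x' : ℝ × ((Fin N → ℝ) × ℝ) => (-x'.2.2) * w)
            (nhds (t, (qx, qt))) (nhds ((-qt) * w)) :=
          (hcneg.mul continuous_const).tendsto _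
        exact T.eventually_const_lt hw2
      have hg : ContinuousAt (fun x' : ℝ × ((Fin N → ℝ) × ℝ) =>
          ((x'.1, fun i => -x'.2.1 i / x'.2.2) : ℝ × (Fin N → ℝ))) (t, (qx, qt)) := by
        refine ContinuousAt.prodMk (continuous_fst.continuousAt) ?_
        refine continuousAt_pi.2 fun i => ContinuousAt.div ?_ ?_ ?_
        · exact (((continuous_apply i).comp (continuous_fst.comp continuous_snd)).neg).continuousAt
        · exact (continuous_snd.snd).continuousAt
        · exact hqt.ne
      have ev3 : ∀ᶠ x' : ℝ × ((Fin N → ℝ) × ℝ) in nhds (t, (qx, qt)),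
          (w : EReal) < f x'.1 (fun i => -x'.2.1 i / x'.2.2) :=
        hg.eventually (hlsc (t, fun i => -qx i / qt) w hw1)
      filter_upwards [ev1, ev2, ev3] with x' h1 h2 h3
      have hfx' : hf f x'.1 x'.2
          = ((-x'.2.2 : ℝ) : EReal) * f x'.1 (fun i => -x'.2.1 i / x'.2.2) := by
        simp [hf, h1]
      rw [hfx']
      calc (y₀ : EReal) < (((-x'.2.2) * w : ℝ) : EReal) := EReal.coe_lt_coe_iff.2 h2
        _ ≤ _ := by
            rw [EReal.coe_mul]
            exact mul_le_mul_of_nonneg_left h3.le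
              (by exact_mod_cast (neg_nonneg.2 h1.le))
    · -- q^t = 0
      subst hqt
      by_cases hqx : qx = 0
      · subst hqx
        have h0 : hf f t ((0 : Fin N → ℝ), (0:ℝ)) = 0 := by simp [hf]
        rw [h0] at hy
        have hy0 : y₀ < 0 := by exact_mod_cast hy
        have ev : ∀ᶠ x' : ℝ × ((Fin N → ℝ) × ℝ) in nhds (t, ((0:Fin N → ℝ), (0:ℝ))),
            y₀ < C * x'.2.2 := by
          have T : Tendsto (fun x' : ℝ × ((Fin N → ℝ) × ℝ) => C * x'.2.2)
              (nhds (t, ((0:Fin N → ℝ), (0:ℝ)))) (nhds (C * 0)) :=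
            (continuous_const.mul (continuous_snd.snd)).tendsto _
          exact T.eventually_const_lt (by simpa using hy0)
        filter_upwards [ev] with x' h1
        exact lt_of_lt_of_le (EReal.coe_lt_coe_iff.2 h1) (hlow x'.1 x'.2)
      · -- q^t = 0, q^x ≠ 0 : hf = ⊤
        obtain ⟨i, hi⟩ : ∃ i, qx i ≠ 0 := Function.ne_iff.1 hqx
        set δ : ℝ := |qx i| / 2 with hδdef
        have hδ : 0 < δ := by positivity
        set B : ℝ := α * δ ^ p with hBdef
        have hB : 0 < B := mul_pos hα (Real.rpow_pos_of_pos hδ p)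
        -- find s₀
        obtain ⟨s₀, hs₀pos, hs₀le1, hkey⟩ :
            ∃ s₀ : ℝ, 0 < s₀ ∧ s₀ ≤ 1 ∧ y₀ + C < B * s₀ ^ (1 - p) := by
          have T1 : Tendsto (fun s : ℝ => s ^ (1 - p)) (nhdsWithin 0 (Set.Ioi 0)) atTop := by
            have T0 : Tendsto (fun s : ℝ => (s⁻¹) ^ (p - 1)) (nhdsWithin 0 (Set.Ioi 0)) atTop :=
              (tendsto_rpow_atTop (by linarith)).comp tendsto_inv_nhdsGT_zero
            refine T0.congr' ?_
            filter_upwards [self_mem_nhdsWithin] with s (hs : 0 < s)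
            rw [← Real.rpow_neg_one s, ← Real.rpow_mul hs.le]
            congr 1
            ring
          have T2 : Tendsto (fun s : ℝ => B * s ^ (1 - p)) (nhdsWithin 0 (Set.Ioi 0)) atTop :=
            T1.const_mul_atTop hB
          have ev := (T2.eventually_gt_atTop (y₀ + C)).and
            ((eventually_nhdsWithin_of_eventually_nhds
              (eventually_le_nhds (by norm_num : (0:ℝ) < 1))).and self_mem_nhdsWithin)
          obtain ⟨s₀, h1, h2, h3⟩ := ev.exists
          exact ⟨s₀, h3, h2, h1⟩
        have eva : ∀ᶠ x' : ℝ × ((Fin N → ℝ) × ℝ) in nhds (t, (qx, (0:ℝ))),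
            δ < |x'.2.1 i| := by
          have T : Tendsto (fun x' : ℝ × ((Fin N → ℝ) × ℝ) => |x'.2.1 i|)
              (nhds (t, (qx, (0:ℝ)))) (nhds |qx i|) :=
            (((continuous_apply i).comp (continuous_fst.comp continuous_snd)).abs).tendsto _
          exact T.eventually_const_lt (by rw [hδdef]; have := abs_pos.2 hi; linarith)
        have evb : ∀ᶠ x' : ℝ × ((Fin N → ℝ) × ℝ) in nhds (t, (qx, (0:ℝ))),
            |x'.2.2| < s₀ := by
          have T : Tendsto (fun x' : ℝ × ((Fin N → ℝ) × ℝ) => |x'.2.2|)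
              (nhds (t, (qx, (0:ℝ)))) (nhds |(0:ℝ)|) :=
            ((continuous_snd.snd).abs).tendsto _
          exact T.eventually_lt_const (by simpa using hs₀pos)
        filter_upwards [eva, evb] with x' h1 h2
        by_cases hneg : x'.2.2 < 0
        · -- negative time component: use the growth bound
          set s' : ℝ := -x'.2.2 with hs'def
          have hs'pos : 0 < s' := neg_pos.2 hneg
          have hs'lt : s' < s₀ := by
            have : |x'.2.2| = s' := abs_of_neg hneg
            linarith [this ▸ h2]
          set z' : Fin N → ℝ := fun j => -x'.2.1 j / x'.2.2 with hz'def
          have hz'i : δ / s' ≤ |z' i| := by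
            have : |z' i| = |x'.2.1 i| / s' := by
              rw [hz'def]
              rw [abs_div, abs_neg, abs_of_neg hneg]
            rw [this]
            gcongr

          have hnorm : δ / s' ≤ eucNorm z' := le_trans hz'i (abs_apply_le_eucNorm z' i)
          have hpow : (δ / s') ^ p ≤ eucNorm z' ^ p :=
            Real.rpow_le_rpow (div_nonneg hδ.le hs'pos.le) hnorm (by linarith)
          have hflow : ((α * (δ / s') ^ p - C : ℝ) : EReal) ≤ f x'.1 z' := by
            refine le_trans ?_ (hgrowth x'.1 z')
            refine EReal.coe_le_coe_iff.2 ?_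
            have := (hr x'.1).2
            nlinarith [hpow]
          have hreal : y₀ < s' * (α * (δ / s') ^ p - C) := by
            have e1 : (δ / s') ^ p = δ ^ p / s' ^ p :=
              Real.div_rpow hδ.le hs'pos.le p
            have e2 : s' ^ (1 - p : ℝ) = s' / s' ^ p := by
              rw [Real.rpow_sub hs'pos, Real.rpow_one]
            have e3 : s' * (α * (δ / s') ^ p - C) = B * s' ^ (1 - p : ℝ) - C * s' := by
              rw [e1, hBdef, e2]; ring
            have e4 : s₀ ^ (1 - p : ℝ) ≤ s' ^ (1 - p : ℝ) :=
              Real.rpow_le_rpow_of_nonpos hs'pos hs'lt.le (by linarith)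
            have e5 : C * s' ≤ C := by nlinarith
            have e6 : B * s₀ ^ (1 - p : ℝ) ≤ B * s' ^ (1 - p : ℝ) :=
              mul_le_mul_of_nonneg_left e4 hB.le
            rw [e3]; linarith
          have hfx' : hf f x'.1 x'.2 = ((s' : ℝ) : EReal) * f x'.1 z' := by
            simp [hf, hneg, hz'def, hs'def]
          rw [hfx']
          calc (y₀ : EReal) < ((s' * (α * (δ / s') ^ p - C) : ℝ) : EReal) :=
                EReal.coe_lt_coe_iff.2 hreal
            _ ≤ _ := by
                rw [EReal.coe_mul]
                exact mul_le_mul_of_nonneg_left hflow (by exact_mod_cast hs'pos.le)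
        · -- nonnegative time component: hf = ⊤
          have hne : x'.2.1 ≠ 0 := by
            intro h
            rw [h] at h1
            simp at h1
            linarith
          have : hf f x'.1 x'.2 = ⊤ := by
            simp [hf, hneg, hne]
          rw [this]
          exact EReal.coe_lt_top y₀
    · -- q^t > 0
      have ev : ∀ᶠ x' : ℝ × ((Fin N → ℝ) × ℝ) in nhds (t, (qx, qt)),
          0 < x'.2.2 :=
        ((continuous_snd.snd).tendsto (t, (qx, qt))).eventually_const_lt hqt
      filter_upwards [ev] with x' h1
      have : hf f x'.1 x'.2 = ⊤ := by
        simp [hf, not_lt.2 h1.le, h1.ne']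
      rw [this]
      exact EReal.coe_lt_top y₀
  refine ⟨hL, ?_⟩
  intro tn qn t q l htend hq2 hlim hlne
  have hle : hf f t q ≤ l := by
    rw [← hlim]
    refine (le_liminf_iff (by isBoundedDefault) (by isBoundedDefault)).2 fun y hy => ?_
    exact htend.eventually (hL (t, q) y hy)
  have hne : hf f t q ≠ ⊤ := fun h => hlne (top_le_iff.1 (h ▸ hle))
  have h2 : q.2 = 0 ∧ q.1 = 0 := by
    by_contra hcon
    exact hne (by rw [hf, if_neg (not_lt.2 hq2), if_neg hcon])
  have h0 : hf f t q = 0 := by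
    rw [hf, if_neg (not_lt.2 hq2), if_pos h2]
  exact ⟨h2.1, h2.2, h0, h0 ▸ hle⟩
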